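/- Let R be a commutative integral domain with fraction field K, P ∈ K^{n×m}, d ∈ R nonzero, P₀ = d⁻¹P, and suppose C₀ ∈ K^{m×n} stabilizes P₀ and there exist A ∈ R^{n×n}, B ∈ R^{m×n} with I = dA + PB. Then C = d⁻¹C₀ stabilizes P; in particular C(I-PC)⁻¹ = C₀(I-P₀C₀)⁻¹A + C₀(I-P₀C₀)⁻¹P₀B has entries in R. -/
import Mathlib


open Matrix

/-- A matrix over the fraction field is *stable* if all its entries lie in `R`. -/
def MatStable (R : Type*) [CommRing R] [IsDomain R] {α β : Type*}
    (M : Matrix α β (FractionRing R)) : Prop :=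
  ∀ i j, ∃ r : R, algebraMap R (FractionRing R) r = M i j

/-- `C` stabilizes `P`: the four closed-loop transfer matrices are stable. -/
def Stabilizes (R : Type*) [CommRing R] [IsDomain R] {n m : ℕ}
    (P : Matrix (Fin n) (Fin m) (FractionRing R))
    (C : Matrix (Fin m) (Fin n) (FractionRing R)) : Prop :=
  (1 - P * C).det ≠ 0 ∧ (1 - C * P).det ≠ 0 ∧
    MatStable R (1 - P * C)⁻¹ ∧ MatStable R ((1 - P * C)⁻¹ * P) ∧
    MatStable R (C * (1 - P * C)⁻¹) ∧ MatStable R (1 - C * P)⁻¹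

lemma matStable_iff {R : Type*} [CommRing R] [IsDomain R] {α β : Type*}
    (M : Matrix α β (FractionRing R)) :
    MatStable R M ↔ ∃ M' : Matrix α β R, M'.map (algebraMap R (FractionRing R)) = M := by
  constructor
  · intro h
    refine ⟨Matrix.of fun i j => (h i j).choose, ?_⟩
    ext i j
    exact (h i j).choose_spec
  · rintro ⟨M', rfl⟩ i j
    exact ⟨M' i j, rfl⟩

theorem stmt16 (R : Type*) [CommRing R] [IsDomain R] (n m : ℕ)
    (P : Matrix (Fin n) (Fin m) (FractionRing R)) (d : R) (hd : d ≠ 0)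
    (C₀ : Matrix (Fin m) (Fin n) (FractionRing R))
    (P₀ : Matrix (Fin n) (Fin m) (FractionRing R))
    (hP₀ : P₀ = (algebraMap R (FractionRing R) d)⁻¹ • P)
    (hstab : Stabilizes R P₀ C₀)
    (A : Matrix (Fin n) (Fin n) R) (B : Matrix (Fin m) (Fin n) R)
    (h : (1 : Matrix (Fin n) (Fin n) (FractionRing R)) =
      algebraMap R (FractionRing R) d • A.map (algebraMap R (FractionRing R)) +
        P * B.map (algebraMap R (FractionRing R))) :
    Stabilizes R P ((algebraMap R (FractionRing R) d)⁻¹ • C₀) ∧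
      ((algebraMap R (FractionRing R) d)⁻¹ • C₀) *
          (1 - P * ((algebraMap R (FractionRing R) d)⁻¹ • C₀))⁻¹ =
        C₀ * (1 - P₀ * C₀)⁻¹ * A.map (algebraMap R (FractionRing R)) +
          C₀ * (1 - P₀ * C₀)⁻¹ * P₀ * B.map (algebraMap R (FractionRing R)) := by
  have hδ : algebraMap R (FractionRing R) d ≠ 0 :=
    (map_ne_zero_iff _ (IsFractionRing.injective R (FractionRing R))).mpr hd
  obtain ⟨hdet1, hdet2, hS1, hS2, hS3, hS4⟩ := hstab
  have hP : P = algebraMap R (FractionRing R) d • P₀ := by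
    rw [hP₀, smul_smul, mul_inv_cancel₀ hδ, one_smul]
  have hPC : P * ((algebraMap R (FractionRing R) d)⁻¹ • C₀) = P₀ * C₀ := by
    rw [hP₀, Matrix.mul_smul, Matrix.smul_mul]
  have hCP : ((algebraMap R (FractionRing R) d)⁻¹ • C₀) * P = C₀ * P₀ := by
    rw [hP₀, Matrix.smul_mul, Matrix.mul_smul]
  have h1 : IsUnit (1 - P₀ * C₀).det := isUnit_iff_ne_zero.mpr hdet1
  have h2 : IsUnit (1 - C₀ * P₀).det := isUnit_iff_ne_zero.mpr hdet2
  have e1 : (1 - C₀ * P₀) * (C₀ * (1 - P₀ * C₀)⁻¹) = C₀ := by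
    rw [← Matrix.mul_assoc]
    have e0 : (1 - C₀ * P₀) * C₀ = C₀ * (1 - P₀ * C₀) := by
      simp [Matrix.sub_mul, Matrix.mul_sub, Matrix.mul_assoc]
    rw [e0, Matrix.mul_assoc, Matrix.mul_nonsing_inv _ h1, Matrix.mul_one]
  have hkey : C₀ * (1 - P₀ * C₀)⁻¹ = (1 - C₀ * P₀)⁻¹ * C₀ := by
    calc C₀ * (1 - P₀ * C₀)⁻¹
        = (1 - C₀ * P₀)⁻¹ * ((1 - C₀ * P₀) * (C₀ * (1 - P₀ * C₀)⁻¹)) := by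
          rw [← Matrix.mul_assoc, Matrix.nonsing_inv_mul _ h2, Matrix.one_mul]
      _ = (1 - C₀ * P₀)⁻¹ * C₀ := by rw [e1]
  have hXP : C₀ * (1 - P₀ * C₀)⁻¹ * P₀ = (1 - C₀ * P₀)⁻¹ - 1 := by
    rw [hkey, Matrix.mul_assoc]
    calc (1 - C₀ * P₀)⁻¹ * (C₀ * P₀)
        = (1 - C₀ * P₀)⁻¹ * 1 - (1 - C₀ * P₀)⁻¹ * (1 - C₀ * P₀) := by
          rw [← Matrix.mul_sub, sub_sub_cancel]
      _ = (1 - C₀ * P₀)⁻¹ - 1 := by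
          rw [Matrix.mul_one, Matrix.nonsing_inv_mul _ h2]
  have hX1 : C₀ * (1 - P₀ * C₀)⁻¹ = algebraMap R (FractionRing R) d •
      (C₀ * (1 - P₀ * C₀)⁻¹ * A.map (algebraMap R (FractionRing R)) +
        C₀ * (1 - P₀ * C₀)⁻¹ * P₀ * B.map (algebraMap R (FractionRing R))) := by
    calc C₀ * (1 - P₀ * C₀)⁻¹ = C₀ * (1 - P₀ * C₀)⁻¹ * 1 := (Matrix.mul_one _).symm
      _ = C₀ * (1 - P₀ * C₀)⁻¹ *
          (algebraMap R (FractionRing R) d • A.map (algebraMap R (FractionRing R)) +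
            P * B.map (algebraMap R (FractionRing R))) := by rw [← h]
      _ = algebraMap R (FractionRing R) d •
          (C₀ * (1 - P₀ * C₀)⁻¹ * A.map (algebraMap R (FractionRing R)) +
            C₀ * (1 - P₀ * C₀)⁻¹ * P₀ * B.map (algebraMap R (FractionRing R))) := by
          rw [hP, Matrix.mul_add, Matrix.mul_smul, Matrix.smul_mul, Matrix.mul_smul, smul_add]
          simp only [Matrix.mul_assoc]
  have goal2 : ((algebraMap R (FractionRing R) d)⁻¹ • C₀) *
      (1 - P * ((algebraMap R (FractionRing R) d)⁻¹ • C₀))⁻¹ =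
      C₀ * (1 - P₀ * C₀)⁻¹ * A.map (algebraMap R (FractionRing R)) +
        C₀ * (1 - P₀ * C₀)⁻¹ * P₀ * B.map (algebraMap R (FractionRing R)) := by
    rw [hPC, Matrix.smul_mul]
    conv_lhs => rw [hX1]
    rw [smul_smul, inv_mul_cancel₀ hδ, one_smul]
  refine ⟨⟨?_, ?_, ?_, ?_, ?_, ?_⟩, goal2⟩
  · rw [hPC]; exact hdet1
  · rw [hCP]; exact hdet2
  · rw [hPC]; exact hS1
  · rw [hPC, hP, Matrix.mul_smul]
    obtain ⟨M', hM'⟩ := (matStable_iff _).mp hS2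
    refine (matStable_iff _).mpr ⟨d • M', ?_⟩
    rw [← hM']; ext i j; simp [Matrix.smul_apply]
  · rw [goal2]
    obtain ⟨X', hX'⟩ := (matStable_iff _).mp hS3
    obtain ⟨W', hW'⟩ := (matStable_iff _).mp hS4
    refine (matStable_iff _).mpr ⟨X' * A + (W' - 1) * B, ?_⟩
    rw [Matrix.map_add _ (fun a b => map_add _ a b), Matrix.map_mul, Matrix.map_mul,
      Matrix.map_sub _ (fun a b => map_sub _ a b), Matrix.map_one _ (map_zero _) (map_one _)]
    rw [hX', hW', hXP]
  · rw [hCP]; exact hS4
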